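/- Unboundedness of the minimum set cover pricing problem when the toll-free items do not cover: in the MinSCPP setup, assume 𝒳 is nonempty and that no S ⊆ I₂ is a cover (i.e., for every S ⊆ I₂, ⋃_{j∈S} A j ≠ E). Then for every M ≥ 0 there exists a feasible toll t such that every S ∈ R(t) satisfies Σ_{j∈S} t j ≥ M; consequently the supremum of the leader's revenue Σ_{j∈S} t j over feasible t and S ∈ R(t) is +∞. -/

import Mathlib

open Finset

/-- Unboundedness of the minimum set cover pricing problem when the
toll-free items do not cover: for every `M ≥ 0` there is a feasible toll forcing every
follower-optimal cover to yield revenue at least `M`; consequently the set of achievable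
leader revenues is unbounded above (its supremum is `+∞`). -/
theorem minscpp_unbounded_without_tollfree_cover {E ι : Type*}
    [Fintype E] [DecidableEq E] [Fintype ι] [DecidableEq ι]
    (I₁ I₂ : Finset ι) (hpart : I₁ ∪ I₂ = Finset.univ) (hdisj : Disjoint I₁ I₂)
    (A : ι → Finset E) (v : ι → ℝ)
    (hcover : ∃ S : Finset ι, S.biUnion A = Finset.univ)
    (hnofree : ∀ S : Finset ι, S ⊆ I₂ → S.biUnion A ≠ Finset.univ) :
    (∀ M : ℝ, 0 ≤ M → ∃ t : ι → ℝ, (∀ j ∈ I₁, 0 ≤ t j) ∧ (∀ j ∈ I₂, t j = 0) ∧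
      ∀ S : Finset ι, S.biUnion A = Finset.univ →
        (∀ S' : Finset ι, S'.biUnion A = Finset.univ →
          ∑ j ∈ S, (v j + t j) ≤ ∑ j ∈ S', (v j + t j)) →
        M ≤ ∑ j ∈ S, t j) ∧
    ¬ BddAbove {r : ℝ | ∃ t : ι → ℝ, (∀ j ∈ I₁, 0 ≤ t j) ∧ (∀ j ∈ I₂, t j = 0) ∧
      ∃ S : Finset ι, S.biUnion A = Finset.univ ∧
        (∀ S' : Finset ι, S'.biUnion A = Finset.univ →
          ∑ j ∈ S, (v j + t j) ≤ ∑ j ∈ S', (v j + t j)) ∧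
        r = ∑ j ∈ S, t j} := by

  have hkey : ∀ S : Finset ι, S.biUnion A = Finset.univ → ∃ j ∈ S, j ∈ I₁ := by
    intro S hS
    by_contra h
    push_neg at h
    refine hnofree S (fun j hj => ?_) hS
    have hju : j ∈ I₁ ∪ I₂ := by rw [hpart]; exact Finset.mem_univ j
    rcases Finset.mem_union.1 hju with h1 | h2
    · exact absurd h1 (h j hj)
    · exact h2
  have hsum : ∀ (M : ℝ), 0 ≤ M → ∀ S : Finset ι, S.biUnion A = Finset.univ →
      M ≤ ∑ j ∈ S, (if j ∈ I₁ then M else 0) := by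
    intro M hM S hS
    obtain ⟨j, hjS, hj1⟩ := hkey S hS
    calc M = (if j ∈ I₁ then M else (0:ℝ)) := by simp [hj1]
    _ ≤ ∑ j ∈ S, (if j ∈ I₁ then M else 0) :=
      Finset.single_le_sum (f := fun i => if i ∈ I₁ then M else (0:ℝ))
        (fun i _ => by show (0:ℝ) ≤ (if i ∈ I₁ then M else (0:ℝ)); split_ifs <;> simp [hM]) hjS
  have hmain : ∀ M : ℝ, 0 ≤ M → ∃ t : ι → ℝ, (∀ j ∈ I₁, 0 ≤ t j) ∧ (∀ j ∈ I₂, t j = 0) ∧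
      ∀ S : Finset ι, S.biUnion A = Finset.univ →
        (∀ S' : Finset ι, S'.biUnion A = Finset.univ →
          ∑ j ∈ S, (v j + t j) ≤ ∑ j ∈ S', (v j + t j)) →
        M ≤ ∑ j ∈ S, t j := by
    intro M hM
    refine ⟨fun j => if j ∈ I₁ then M else 0, fun j hj => by simp [hj, hM],
      fun j hj => by simp [Finset.disjoint_right.mp hdisj hj], ?_⟩
    intro S hS _
    exact hsum M hM S hS
  refine ⟨hmain, ?_⟩
  rintro ⟨b, hb⟩
  set M : ℝ := max b 0 + 1 with hMdef
  have hM0 : (0:ℝ) ≤ M := by positivity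
  obtain ⟨t, ht1, ht2, ht3⟩ := hmain M hM0
  -- find a minimizer among covers
  obtain ⟨S₀, hS₀⟩ := hcover
  obtain ⟨Smin, hSmin, hmin⟩ := Finset.exists_min_image
    ((Finset.univ : Finset (Finset ι)).filter (fun S => S.biUnion A = Finset.univ))
    (fun S => ∑ j ∈ S, (v j + t j))
    ⟨S₀, Finset.mem_filter.2 ⟨Finset.mem_univ _, hS₀⟩⟩
  have hSminc : Smin.biUnion A = Finset.univ := (Finset.mem_filter.1 hSmin).2
  have hopt : ∀ S' : Finset ι, S'.biUnion A = Finset.univ →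
      ∑ j ∈ Smin, (v j + t j) ≤ ∑ j ∈ S', (v j + t j) := by
    intro S' hS'
    exact hmin S' (Finset.mem_filter.2 ⟨Finset.mem_univ _, hS'⟩)
  have hmem : (∑ j ∈ Smin, t j) ∈ {r : ℝ | ∃ t : ι → ℝ,
      (∀ j ∈ I₁, 0 ≤ t j) ∧ (∀ j ∈ I₂, t j = 0) ∧
      ∃ S : Finset ι, S.biUnion A = Finset.univ ∧
        (∀ S' : Finset ι, S'.biUnion A = Finset.univ →
          ∑ j ∈ S, (v j + t j) ≤ ∑ j ∈ S', (v j + t j)) ∧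
        r = ∑ j ∈ S, t j} := ⟨t, ht1, ht2, Smin, hSminc, hopt, rfl⟩
  have hle : (∑ j ∈ Smin, t j) ≤ b := hb hmem
  have hMle : M ≤ ∑ j ∈ Smin, t j := ht3 Smin hSminc hopt
  have : M ≤ b := le_trans hMle hle
  have : b < M := by
    rw [hMdef]
    linarith [le_max_left b (0:ℝ)]
  linarith
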